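/- Gessel's model admits the rational invariant pair (I₁, I₂): for every field k and all t, x, y ∈ k with t ≠ 0, x ≠ 0, y ≠ 0, y ≠ −1, if K(x,y) = t(1 + y + x²y + x²y²) − xy = 0, then I₁(x) = I₂(y), where I₁(x) = −t/x² + 1/x + 2t + x − t x² and I₂(y) = 1/(t(1+y)(1+1/y)) + t(1+y)(1+1/y). -/

import Mathlib

/-- Gessel's model admits the rational invariant pair
`I₁(x) = -t/x² + 1/x + 2t + x - t x²` and
`I₂(y) = 1/(t(1+y)(1+1/y)) + t(1+y)(1+1/y)`:
they agree at every point of the kernel curve `K(x,y) = 0`. -/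
theorem gessel_invariants {k : Type*} [Field k] (t x y : k)
    (ht : t ≠ 0) (hx : x ≠ 0) (hy : y ≠ 0) (hy1 : y ≠ -1)
    (hK : t * (1 + y + x ^ 2 * y + x ^ 2 * y ^ 2) - x * y = 0) :
    -t / x ^ 2 + 1 / x + 2 * t + x - t * x ^ 2 =
      1 / (t * (1 + y) * (1 + 1 / y)) + t * (1 + y) * (1 + 1 / y) := by
  have h1 : (1 : k) + y ≠ 0 := by intro h; apply hy1; linear_combination h
  have h2 : t + t * y * 2 + t * y ^ 2 ≠ 0 := by
    have : t + t * y * 2 + t * y ^ 2 = t * ((1 + y) * (1 + y)) := by ring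
    rw [this]
    exact mul_ne_zero ht (mul_ne_zero h1 h1)
  field_simp
  ring_nf
  field_simp [h2]
  ring_nf
  linear_combination (x * y - (1 + y) * (y + x ^ 2) * t) * hK
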